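/- Assume the action (τ_x) is ergodic. Let C > 0 and let F : ℝ^d × Ω → ℝ be jointly measurable such that: F(0, ω) = 0 and F(·, ω) is Lipschitz with constant C for every ω; F has stationary increments, i.e. F(x + z, ω) − F(z, ω) = F(x, τ_z ω) for all x, z ∈ ℝ^d and ω ∈ Ω; and E_ℙ[F(x, ·)] = 0 for every x ∈ ℝ^d. Then for ℙ-almost every ω, F(·, ω) is strictly sublinear at infinity: lim_{|x| → +∞} F(x, ω)/|x| = 0. -/

import Mathlib

open MeasureTheory Filter Topology

noncomputable section

/-- Euclidean space `ℝ^d`. -/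
abbrev EucSp (d : ℕ) := EuclideanSpace ℝ (Fin d)

set_option maxHeartbeats 1000000

namespace Stmt16Aux

variable {Ω : Type*} [MeasurableSpace Ω]

/-- Birkhoff sums: `birkS h T k = ∑_{j<k} h ∘ T^j`, recursively `S_{k+1} = h + S_k ∘ T`. -/
def birkS (h : Ω → ℝ) (T : Ω → Ω) : ℕ → Ω → ℝ
  | 0, _ => 0
  | (n+1), ω => h ω + birkS h T n (T ω)

/-- Running maxima of the Birkhoff sums over `1 ≤ k ≤ n` (with `birkM 0 = 0`). -/
def birkM (h : Ω → ℝ) (T : Ω → Ω) : ℕ → Ω → ℝ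
  | 0, _ => 0
  | (n+1), ω => max (birkM h T n ω) (birkS h T (n+1) ω)

variable {h : Ω → ℝ} {T : Ω → Ω}

lemma birkS_measurable (hm : Measurable h) (hT : Measurable T) (n : ℕ) :
    Measurable (birkS h T n) := by
  induction n with
  | zero => simpa [birkS] using measurable_const
  | succ n ih => exact hm.add (ih.comp hT)

lemma birkM_measurable (hm : Measurable h) (hT : Measurable T) (n : ℕ) :
    Measurable (birkM h T n) := by
  induction n with
  | zero => simpa [birkM] using measurable_const
  | succ n ih => exact ih.max (birkS_measurable hm hT (n+1))

lemma birkM_nonneg (n : ℕ) (ω : Ω) : 0 ≤ birkM h T n ω := by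
  induction n with
  | zero => simp [birkM]
  | succ n ih => exact le_trans ih (le_max_left _ _)

lemma birkS_le_birkM {k n : ℕ} (hk : k ≤ n) (ω : Ω) : birkS h T k ω ≤ birkM h T n ω := by
  induction n with
  | zero =>
    interval_cases k
    simp [birkS, birkM]
  | succ n ih =>
    rcases Nat.lt_or_ge k (n+1) with hlt | hge
    · exact le_trans (ih (Nat.lt_succ_iff.mp hlt)) (le_max_left _ _)
    · have : k = n + 1 := le_antisymm hk hge
      subst this
      exact le_max_right _ _
lemma birkM_mono (n : ℕ) (ω : Ω) : birkM h T n ω ≤ birkM h T (n+1) ω := le_max_left _ _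

lemma birkM_eq_birkS {n : ℕ} {ω : Ω} (hpos : 0 < birkM h T n ω) :
    ∃ k, 1 ≤ k ∧ k ≤ n ∧ birkM h T n ω = birkS h T k ω := by
  induction n with
  | zero => simp [birkM] at hpos
  | succ n ih =>
    rcases le_or_gt (birkM h T n ω) (birkS h T (n+1) ω) with hle | hlt
    · exact ⟨n+1, Nat.succ_le_succ (Nat.zero_le n), le_refl _, max_eq_right hle⟩
    · have hM : birkM h T (n+1) ω = birkM h T n ω := max_eq_left hlt.le
      rw [hM] at hpos ⊢
      obtain ⟨k, h1, h2, h3⟩ := ih hpos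
      exact ⟨k, h1, h2.trans (Nat.le_succ n), h3⟩

lemma birkM_key (n : ℕ) {ω : Ω} (hpos : 0 < birkM h T n ω) :
    birkM h T n ω ≤ h ω + birkM h T n (T ω) := by
  obtain ⟨k, h1, h2, h3⟩ := birkM_eq_birkS hpos
  obtain ⟨k, rfl⟩ : ∃ j, k = j + 1 := ⟨k - 1, (Nat.succ_pred_eq_of_pos h1).symm⟩
  rw [h3]
  show h ω + birkS h T k (T ω) ≤ _
  exact add_le_add le_rfl (birkS_le_birkM (le_trans (Nat.le_succ k) h2) (T ω))

lemma birkS_bound {B : ℝ} (hb : ∀ ω, |h ω| ≤ B) (k : ℕ) (ω : Ω) :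
    |birkS h T k ω| ≤ k * B := by
  induction k generalizing ω with
  | zero => simp [birkS]
  | succ k ih =>
    calc |h ω + birkS h T k (T ω)| ≤ |h ω| + |birkS h T k (T ω)| := abs_add_le _ _
    _ ≤ B + k * B := add_le_add (hb ω) (ih (T ω))
    _ = (k+1 : ℕ) * B := by push_cast; ring

lemma birkM_bound {B : ℝ} (hB : 0 ≤ B) (hb : ∀ ω, |h ω| ≤ B) (n : ℕ) (ω : Ω) :
    |birkM h T n ω| ≤ (n+1) * B := by
  rw [abs_of_nonneg (birkM_nonneg n ω)]
  induction n with
  | zero => simp [birkM]; positivity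
  | succ n ih =>
    refine max_le (ih.trans ?_) ?_
    · have : ((n:ℝ)+1) ≤ ((n:ℝ)+1+1) := by linarith
      exact mul_le_mul_of_nonneg_right (by push_cast; linarith) hB
    · refine le_trans (le_abs_self _) ((birkS_bound hb (n+1) ω).trans ?_)
      push_cast
      exact mul_le_mul_of_nonneg_right (by linarith) hB

lemma integrable_of_bound {ℙ : Measure Ω} [IsFiniteMeasure ℙ] {f : Ω → ℝ} (hf : Measurable f)
    (B : ℝ) (hb : ∀ ω, |f ω| ≤ B) : Integrable f ℙ := by
  refine (integrable_const B).mono' hf.aestronglyMeasurable (ae_of_all _ fun ω => ?_)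
  simpa [Real.norm_eq_abs] using hb ω

/-- The maximal ergodic lemma. -/
lemma maximal_ergodic {ℙ : Measure Ω} [IsProbabilityMeasure ℙ] (hT : MeasurePreserving T ℙ ℙ)
    (hm : Measurable h) {B : ℝ} (hB : 0 ≤ B) (hb : ∀ ω, |h ω| ≤ B) (n : ℕ) :
    0 ≤ ∫ ω in {ω | 0 < birkM h T n ω}, h ω ∂ℙ := by
  set M := birkM h T n with hM
  have hMm : Measurable M := birkM_measurable hm hT.measurable n
  have hMTm : Measurable (fun ω => M (T ω)) := hMm.comp hT.measurable
  set E := {ω | 0 < M ω} with hE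
  have hEm : MeasurableSet E := measurableSet_lt measurable_const hMm
  have int_h : Integrable h ℙ := integrable_of_bound hm B hb
  have int_M : Integrable M ℙ := integrable_of_bound hMm ((n+1)*B) (birkM_bound hB hb n)
  have int_MT : Integrable (fun ω => M (T ω)) ℙ :=
    integrable_of_bound hMTm ((n+1)*B) (fun ω => birkM_bound hB hb n (T ω))
  have key : ∀ ω ∈ E, M ω - M (T ω) ≤ h ω := by
    intro ω hω
    have := birkM_key n (show 0 < birkM h T n ω from hω)
    linarith [this]
  have step2 : ∫ ω in E, (M ω - M (T ω)) ∂ℙ ≤ ∫ ω in E, h ω ∂ℙ :=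
    setIntegral_mono_on (int_M.sub int_MT).integrableOn int_h.integrableOn hEm key
  have step3 : ∫ ω in E, M ω ∂ℙ = ∫ ω, M ω ∂ℙ := by
    have hcompl : ∫ ω in Eᶜ, M ω ∂ℙ = 0 := by
      have : ∀ ω ∈ Eᶜ, M ω = 0 := by
        intro ω hω
        have h1 : ¬ (0 < M ω) := hω
        exact le_antisymm (not_lt.mp h1) (birkM_nonneg n ω)
      calc ∫ ω in Eᶜ, M ω ∂ℙ = ∫ ω in Eᶜ, (0:ℝ) ∂ℙ :=
            setIntegral_congr_fun hEm.compl this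
      _ = 0 := by simp
    have := integral_add_compl hEm int_M (f := M)
    linarith
  have step4 : ∫ ω in E, M (T ω) ∂ℙ ≤ ∫ ω, M (T ω) ∂ℙ :=
    setIntegral_le_integral int_MT (ae_of_all _ fun ω => birkM_nonneg n (T ω))
  have step5 : ∫ ω, M (T ω) ∂ℙ = ∫ ω, M ω ∂ℙ := by
    rw [← integral_map hT.measurable.aemeasurable hMm.aestronglyMeasurable, hT.map_eq]
  have hsub : ∫ ω in E, (M ω - M (T ω)) ∂ℙ
      = (∫ ω in E, M ω ∂ℙ) - ∫ ω in E, M (T ω) ∂ℙ :=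
    integral_sub (int_M.integrableOn (s := E)) (int_MT.integrableOn (s := E))
  rw [hsub] at step2
  linarith


def Aset {d : ℕ} {Ω : Type*} (F : EucSp d → Ω → ℝ) (e : EucSp d) (a : ℝ) : Set Ω :=
  {ω | ∀ N : ℕ, ∃ n : ℕ, N ≤ n ∧ a * n < F ((n : ℝ) • e) ω}

lemma measurable_F_fixed {d : ℕ} {F : EucSp d → Ω → ℝ}
    (hFmeas : Measurable fun p : EucSp d × Ω => F p.1 p.2) (x : EucSp d) :
    Measurable fun ω => F x ω :=
  hFmeas.comp (measurable_const.prodMk measurable_id)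

lemma Aset_measurable {d : ℕ} {F : EucSp d → Ω → ℝ}
    (hFmeas : Measurable fun p : EucSp d × Ω => F p.1 p.2) (e : EucSp d) (a : ℝ) :
    MeasurableSet (Aset F e a) := by
  have : Aset F e a
      = ⋂ N : ℕ, ⋃ n : ℕ, ⋃ (_ : N ≤ n), {ω | a * n < F ((n : ℝ) • e) ω} := by
    ext ω
    simp [Aset, Set.mem_iInter, Set.mem_iUnion]
  rw [this]
  exact MeasurableSet.iInter fun N => MeasurableSet.iUnion fun n =>
    MeasurableSet.iUnion fun _ =>
      measurableSet_lt measurable_const (measurable_F_fixed hFmeas _)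

/-- The density bound from the maximal ergodic lemma. -/
lemma density_bound {d : ℕ} (ℙ : Measure Ω) [IsProbabilityMeasure ℙ]
    (T : Ω → Ω) (hT : MeasurePreserving T ℙ ℙ)
    (C : ℝ) (hC : 0 < C) (F : EucSp d → Ω → ℝ)
    (hFmeas : Measurable fun p : EucSp d × Ω => F p.1 p.2)
    (e : EucSp d)
    (hbe : ∀ ω, |F e ω| ≤ C * ‖e‖)
    (hme : ∫ ω, F e ω ∂ℙ = 0)
    (hF0 : ∀ ω, F 0 ω = 0)
    (hcoc : ∀ (x : EucSp d) ω, F (x + e) ω - F e ω = F x (T ω))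
    (q : ℝ) (hq : 0 < q) :
    (ℙ (Aset F e q)).toReal ≤ 1 - q / (C * ‖e‖ + q) := by
  set B := C * ‖e‖ with hBdef
  have hB0 : 0 ≤ B := by positivity
  have hBq : 0 < B + q := by linarith
  set g : Ω → ℝ := fun ω => F e ω - q with hgdef
  have hgm : Measurable g := (measurable_F_fixed hFmeas e).sub measurable_const
  have hbg : ∀ ω, |g ω| ≤ B + q := by
    intro ω
    have h1 : |F e ω + -q| ≤ |F e ω| + |(-q)| := abs_add_le _ _
    have h2 : |(-q)| = q := by rw [abs_neg, abs_of_pos hq]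
    simp only [hgdef, sub_eq_add_neg]
    calc |F e ω + -q| ≤ |F e ω| + q := by rw [h2] at h1; exact h1
    _ ≤ B + q := by linarith [hbe ω]
  -- cocycle identity
  have hS : ∀ k ω, birkS g T k ω = F ((k : ℝ) • e) ω - q * k := by
    intro k
    induction k with
    | zero => intro ω; simp [birkS, hF0]
    | succ k ih =>
      intro ω
      show g ω + birkS g T k (T ω) = _
      rw [ih (T ω)]
      have h1 := hcoc ((k : ℝ) • e) ω
      have h2 : ((k + 1 : ℕ) : ℝ) • e = (k : ℝ) • e + e := by
        push_cast
        rw [add_smul, one_smul]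
      rw [h2]
      simp only [hgdef]
      push_cast
      linarith
  set G : ℕ → Set Ω := fun n => {ω | 0 < birkM g T n ω} with hGdef
  have hGm : ∀ n, MeasurableSet (G n) := fun n =>
    measurableSet_lt measurable_const (birkM_measurable hgm hT.measurable n)
  have hGmono : Monotone G := by
    apply monotone_nat_of_le_succ
    intro n ω hω
    exact lt_of_lt_of_le hω (birkM_mono n ω)
  set U : Set Ω := ⋃ n, G n with hUdef
  have hUm : MeasurableSet U := MeasurableSet.iUnion hGm
  have hAsub : Aset F e q ⊆ U := by
    intro ω hω
    obtain ⟨n, hn1, hn2⟩ := hω 1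
    refine Set.mem_iUnion.2 ⟨n, ?_⟩
    show 0 < birkM g T n ω
    have h1 : 0 < birkS g T n ω := by rw [hS n ω]; linarith
    exact lt_of_lt_of_le h1 (birkS_le_birkM (le_refl n) ω)
  have int_g : Integrable g ℙ := integrable_of_bound hgm (B + q) hbg
  have hmax : ∀ n, 0 ≤ ∫ ω in G n, g ω ∂ℙ := fun n =>
    maximal_ergodic hT hgm hBq.le hbg n
  have htend : Tendsto (fun n => ∫ ω in G n, g ω ∂ℙ) atTop (𝓝 (∫ ω in U, g ω ∂ℙ)) :=
    tendsto_setIntegral_of_monotone hGm hGmono int_g.integrableOn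
  have hUpos : 0 ≤ ∫ ω in U, g ω ∂ℙ := ge_of_tendsto' htend hmax
  have int_Fe : Integrable (fun ω => F e ω) ℙ :=
    integrable_of_bound (measurable_F_fixed hFmeas e) B hbe
  have hintg : ∫ ω, g ω ∂ℙ = -q := by
    simp only [hgdef]
    rw [integral_sub int_Fe (integrable_const q), hme, integral_const]
    simp
  have hsplit : (∫ ω in U, g ω ∂ℙ) + ∫ ω in Uᶜ, g ω ∂ℙ = ∫ ω, g ω ∂ℙ :=
    integral_add_compl hUm int_g
  have hbound : |∫ ω in Uᶜ, g ω ∂ℙ| ≤ (B + q) * (ℙ Uᶜ).toReal := by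
    have := norm_setIntegral_le_of_norm_le_const (μ := ℙ) (s := Uᶜ) (f := g)
      (measure_lt_top ℙ _) (fun ω _ => by
        simpa [Real.norm_eq_abs] using hbg ω)
    simpa [Real.norm_eq_abs, Measure.real] using this
  set t := (ℙ Uᶜ).toReal with htdef
  have hqt : q ≤ (B + q) * t := by
    have h1 : ∫ ω in Uᶜ, g ω ∂ℙ ≤ -q := by linarith
    have h2 : q ≤ -∫ ω in Uᶜ, g ω ∂ℙ := by linarith
    calc q ≤ -∫ ω in Uᶜ, g ω ∂ℙ := h2
    _ ≤ |∫ ω in Uᶜ, g ω ∂ℙ| := neg_le_abs _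
    _ ≤ (B + q) * t := hbound
  have ht : q / (B + q) ≤ t := (div_le_iff₀ hBq).2 (by linarith)
  have hUt : (ℙ U).toReal + t = 1 := by
    have h1 : ℙ U + ℙ Uᶜ = 1 := by rw [measure_add_measure_compl hUm, measure_univ]
    have h2 := congrArg ENNReal.toReal h1
    rw [ENNReal.toReal_add (measure_ne_top ℙ U) (measure_ne_top ℙ Uᶜ)] at h2
    simpa using h2
  have hA : (ℙ (Aset F e q)).toReal ≤ (ℙ U).toReal :=
    ENNReal.toReal_mono (measure_ne_top ℙ U) (measure_mono hAsub)
  linarith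


lemma abs_sub_le_abs_add_abs (a b : ℝ) : |a - b| ≤ |a| + |b| := by
  calc |a - b| = |a + (-b)| := by ring_nf
  _ ≤ |a| + |(-b)| := abs_add_le _ _
  _ = |a| + |b| := by rw [abs_neg]

lemma Aset_antitone {d : ℕ} {F : EucSp d → Ω → ℝ} {e : EucSp d} {a b : ℝ} (hab : a ≤ b) :
    Aset F e b ⊆ Aset F e a := by
  intro ω hω N
  obtain ⟨n, hn1, hn2⟩ := hω N
  exact ⟨n, hn1, lt_of_le_of_lt (mul_le_mul_of_nonneg_right hab n.cast_nonneg) hn2⟩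

lemma freq_shift {s t : ℕ → ℝ} {K p p' : ℝ} (hK : 0 ≤ K) (hpp : p' < p)
    (hst : ∀ n, s n ≤ t n + K) (hs : ∀ N : ℕ, ∃ n : ℕ, N ≤ n ∧ p * n < s n) :
    ∀ N : ℕ, ∃ n : ℕ, N ≤ n ∧ p' * n < t n := by
  intro N
  obtain ⟨n, hn1, hn2⟩ := hs (max N (⌈K / (p - p')⌉₊ + 1))
  refine ⟨n, le_trans (le_max_left _ _) hn1, ?_⟩
  have hd : 0 < p - p' := by linarith
  have hceil : K / (p - p') ≤ (⌈K / (p - p')⌉₊ : ℝ) := Nat.le_ceil _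
  have hn : (⌈K / (p - p')⌉₊ + 1 : ℕ) ≤ n := le_trans (le_max_right _ _) hn1
  have hn' : (⌈K / (p - p')⌉₊ : ℝ) + 1 ≤ (n : ℝ) := by exact_mod_cast hn
  have hKle : K ≤ (p - p') * n := by
    rw [div_le_iff₀ hd] at hceil
    nlinarith
  have h3 := hst n
  nlinarith

/-- Via ergodicity: the frequently-superlinear event is null. -/
lemma Aset_null {d : ℕ} (ℙ : Measure Ω) [IsProbabilityMeasure ℙ]
    (τ : EucSp d → Ω → Ω)
    (hτmp : ∀ x, MeasurePreserving (τ x) ℙ ℙ)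
    (herg : ∀ E : Set Ω, MeasurableSet E → (∀ x, τ x ⁻¹' E = E) → ℙ E = 0 ∨ ℙ E = 1)
    (C : ℝ) (hC : 0 < C)
    (F : EucSp d → Ω → ℝ)
    (hFmeas : Measurable fun p : EucSp d × Ω => F p.1 p.2)
    (hF0 : ∀ ω, F 0 ω = 0)
    (hFlip : ∀ ω x y, |F x ω - F y ω| ≤ C * ‖x - y‖)
    (hFstat : ∀ x z ω, F (x + z) ω - F z ω = F x (τ z ω))
    (hFmean : ∀ x, ∫ ω, F x ω ∂ℙ = 0)
    (e : EucSp d) (q : ℚ) (hq : 0 < q) :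
    ℙ (Aset F e (q : ℝ)) = 0 := by
  have hbx : ∀ (x : EucSp d) ω, |F x ω| ≤ C * ‖x‖ := by
    intro x ω
    have := hFlip ω x 0
    simpa [hF0, sub_zero] using this
  have hshift : ∀ (x : EucSp d) ω (n : ℕ),
      |F ((n : ℝ) • e) (τ x ω) - F ((n : ℝ) • e) ω| ≤ 2 * C * ‖x‖ := by
    intro x ω n
    have h1 := hFstat ((n : ℝ) • e) x ω
    have h2 : |F ((n : ℝ) • e + x) ω - F ((n : ℝ) • e) ω| ≤ C * ‖x‖ := by
      have := hFlip ω ((n : ℝ) • e + x) ((n : ℝ) • e)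
      simpa [add_sub_cancel_left] using this
    have h3 := hbx x ω
    have h4 : F ((n : ℝ) • e) (τ x ω) - F ((n : ℝ) • e) ω
        = (F ((n : ℝ) • e + x) ω - F ((n : ℝ) • e) ω) - F x ω := by linarith
    rw [h4]
    calc |(F ((n : ℝ) • e + x) ω - F ((n : ℝ) • e) ω) - F x ω|
        ≤ |F ((n : ℝ) • e + x) ω - F ((n : ℝ) • e) ω| + |F x ω| :=
          abs_sub_le_abs_add_abs _ _
    _ ≤ C * ‖x‖ + C * ‖x‖ := add_le_add h2 h3
    _ = 2 * C * ‖x‖ := by ring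
  set ε : ℚ := q / 2 with hεdef
  have hε : 0 < ε := by positivity
  set S := {p : ℚ // (ε : ℝ) < p ∧ (p : ℝ) ≤ 2 * ε} with hSdef
  set A' : Set Ω := ⋃ p : S, Aset F e ((p : ℚ) : ℝ) with hA'def
  have hA'm : MeasurableSet A' := MeasurableSet.iUnion fun p => Aset_measurable hFmeas e _
  have hKx : ∀ x : EucSp d, (0:ℝ) ≤ 2 * C * ‖x‖ := fun x => by positivity
  have hinv : ∀ x, τ x ⁻¹' A' = A' := by
    intro x
    ext ω
    simp only [Set.mem_preimage, hA'def, Set.mem_iUnion]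
    constructor
    · rintro ⟨⟨p, hp1, hp2⟩, hmem⟩
      obtain ⟨p', hp'1, hp'2⟩ := exists_rat_btwn hp1
      refine ⟨⟨p', hp'1, le_trans hp'2.le hp2⟩, ?_⟩
      exact freq_shift (hKx x) hp'2
        (fun n => by linarith [abs_le.1 (hshift x ω n) |>.2]) hmem
    · rintro ⟨⟨p, hp1, hp2⟩, hmem⟩
      obtain ⟨p', hp'1, hp'2⟩ := exists_rat_btwn hp1
      refine ⟨⟨p', hp'1, le_trans hp'2.le hp2⟩, ?_⟩
      exact freq_shift (hKx x) hp'2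
        (fun n => by linarith [abs_le.1 (hshift x ω n) |>.1]) hmem
  rcases herg A' hA'm hinv with h0 | h1
  · have hsub : Aset F e (q : ℝ) ⊆ A' := by
      have hq1 : (ε : ℝ) < q := by
        rw [Rat.cast_lt]
        simp only [hεdef]
        linarith
      have hq2 : ((q : ℚ) : ℝ) ≤ 2 * ε := by
        push_cast [hεdef]
        ring_nf
        rfl
      exact Set.subset_iUnion (fun p : S => Aset F e ((p : ℚ) : ℝ)) ⟨q, hq1, hq2⟩
    exact le_antisymm (h0 ▸ measure_mono hsub) zero_le
  · exfalso
    have hdir : Directed (· ⊆ ·) (fun p : S => Aset F e ((p : ℚ) : ℝ)) := by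
      rintro ⟨p1, hp11, hp12⟩ ⟨p2, hp21, hp22⟩
      refine ⟨⟨min p1 p2, ?_, ?_⟩, ?_, ?_⟩
      · rw [Rat.cast_min]
        exact lt_min hp11 hp21
      · rw [Rat.cast_min]
        exact le_trans (min_le_left _ _) hp12
      · exact Aset_antitone (by rw [Rat.cast_min]; exact min_le_left _ _)
      · exact Aset_antitone (by rw [Rat.cast_min]; exact min_le_right _ _)
    have hsup : ℙ A' = ⨆ p : S, ℙ (Aset F e ((p : ℚ) : ℝ)) := hdir.measure_iUnion
    set B := C * ‖e‖ with hBdef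
    have hB0 : 0 ≤ B := by positivity
    set c : ℝ := (ε : ℝ) / (B + 2 * ε) with hcdef
    have hεR : (0:ℝ) < (ε : ℝ) := by exact_mod_cast hε
    have hc0 : 0 < c := by
      apply div_pos hεR
      linarith
    have hbnd : ∀ p : S, ℙ (Aset F e ((p : ℚ) : ℝ)) ≤ ENNReal.ofReal (1 - c) := by
      rintro ⟨p, hp1, hp2⟩
      have hp0 : (0:ℝ) < (p : ℝ) := lt_trans hεR hp1
      have hdb := density_bound ℙ (τ e) (hτmp e) C hC F hFmeas e (hbx e) (hFmean e) hF0
        (fun x ω => hFstat x e ω) (p : ℝ) hp0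
      have hcle : c ≤ (p : ℝ) / (B + p) := by
        rw [hcdef, hBdef]
        apply div_le_div₀ (le_of_lt hp0) hp1.le (by linarith) (by linarith)
      have h2 : (ℙ (Aset F e ((p : ℚ) : ℝ))).toReal ≤ 1 - c := le_trans hdb (by linarith)
      calc ℙ (Aset F e ((p : ℚ) : ℝ))
          = ENNReal.ofReal ((ℙ (Aset F e ((p : ℚ) : ℝ))).toReal) :=
            (ENNReal.ofReal_toReal (measure_ne_top ℙ _)).symm
      _ ≤ ENNReal.ofReal (1 - c) := ENNReal.ofReal_le_ofReal h2
    have hlt : ℙ A' < 1 := by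
      rw [hsup]
      refine lt_of_le_of_lt (iSup_le hbnd) ?_
      exact ENNReal.ofReal_lt_one.2 (by linarith)
    rw [h1] at hlt
    exact lt_irrefl _ hlt

end Stmt16Aux

open Stmt16Aux in
/-- If the action `(τ_x)` is ergodic and `F` is jointly measurable, vanishes at `x = 0`,
is `C`-Lipschitz in `x`, has stationary increments and mean zero, then `ℙ`-a.s.
`F(·, ω)` is strictly sublinear at infinity: `F(x, ω)/|x| → 0` as `|x| → ∞`. -/
theorem stmt16 {d : ℕ} {Ω : Type*} [TopologicalSpace Ω] [PolishSpace Ω]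
    [MeasurableSpace Ω] [BorelSpace Ω]
    (ℙ : Measure Ω) [IsProbabilityMeasure ℙ]
    (τ : EucSp d → Ω → Ω)
    (hτgrp : ∀ x y ω, τ (x + y) ω = τ x (τ y ω))
    (hτzero : ∀ ω, τ 0 ω = ω)
    (hτcont : ∀ x, Continuous (τ x))
    (hτmp : ∀ x, MeasurePreserving (τ x) ℙ ℙ)
    (hτmeas : Measurable fun p : EucSp d × Ω => τ p.1 p.2)
    (herg : ∀ E : Set Ω, MeasurableSet E → (∀ x, τ x ⁻¹' E = E) → ℙ E = 0 ∨ ℙ E = 1)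
    (C : ℝ) (hC : 0 < C)
    (F : EucSp d → Ω → ℝ)
    (hFmeas : Measurable fun p : EucSp d × Ω => F p.1 p.2)
    (hF0 : ∀ ω, F 0 ω = 0)
    (hFlip : ∀ ω x y, |F x ω - F y ω| ≤ C * ‖x - y‖)
    (hFstat : ∀ x z ω, F (x + z) ω - F z ω = F x (τ z ω))
    (hFmean : ∀ x, ∫ ω, F x ω ∂ℙ = 0) :
    ∀ᵐ ω ∂ℙ,
      Tendsto (fun x : EucSp d => F x ω / ‖x‖) (Filter.comap norm atTop) (𝓝 0) := by
  classical
  set F' : EucSp d → Ω → ℝ := fun x ω => -(F x ω) with hF'def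
  have hF'meas : Measurable fun p : EucSp d × Ω => F' p.1 p.2 := hFmeas.neg
  have hF'0 : ∀ ω, F' 0 ω = 0 := fun ω => by simp [hF'def, hF0]
  have hF'lip : ∀ ω x y, |F' x ω - F' y ω| ≤ C * ‖x - y‖ := by
    intro ω x y
    have h1 := hFlip ω x y
    have h2 : F' x ω - F' y ω = -(F x ω - F y ω) := by simp [hF'def]; ring
    rw [h2, abs_neg]
    exact h1
  have hF'stat : ∀ x z ω, F' (x + z) ω - F' z ω = F' x (τ z ω) := by
    intro x z ω
    have := hFstat x z ω
    simp only [hF'def]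
    linarith
  have hF'mean : ∀ x, ∫ ω, F' x ω ∂ℙ = 0 := by
    intro x
    simp only [hF'def]
    rw [integral_neg, hFmean x, neg_zero]
  obtain ⟨D, hDc, hDd⟩ := TopologicalSpace.exists_countable_dense (EucSp d)
  have key : ∀ᵐ ω ∂ℙ, ∀ e ∈ D, ∀ q : ℚ, 0 < q →
      ω ∉ Aset F e (q : ℝ) ∧ ω ∉ Aset F' e (q : ℝ) := by
    rw [ae_ball_iff hDc]
    intro e _
    rw [ae_all_iff]
    intro q
    by_cases hq : 0 < q
    · have h1 := Aset_null ℙ τ hτmp herg C hC F hFmeas hF0 hFlip hFstat hFmean e q hq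
      have h2 := Aset_null ℙ τ hτmp herg C hC F' hF'meas hF'0 hF'lip hF'stat hF'mean e q hq
      filter_upwards [measure_eq_zero_iff_ae_notMem.1 h1, measure_eq_zero_iff_ae_notMem.1 h2]
        with ω hω1 hω2 _
      exact ⟨hω1, hω2⟩
    · exact ae_of_all _ fun ω hq' => absurd hq' hq
  filter_upwards [key] with ω hω
  rw [Metric.tendsto_nhds]
  intro ε hε
  set ε' : ℝ := ε / 2 with hε'def
  have hε' : 0 < ε' := by positivity
  -- main quantitative sublinearity bound
  have main : ∃ R : ℝ, 1 ≤ R ∧ ∀ x : EucSp d, R ≤ ‖x‖ → |F x ω| ≤ ε' * ‖x‖ := by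
    obtain ⟨qr, hqr0, hqr1⟩ := exists_rat_btwn (show (0:ℝ) < ε' / 3 by positivity)
    have hq : 0 < qr := by exact_mod_cast hqr0
    set δ : ℝ := min 1 (ε' / (3 * C)) with hδdef
    have hδ0 : 0 < δ := lt_min one_pos (by positivity)
    have hδ1 : δ ≤ 1 := min_le_left _ _
    have hcover : Metric.sphere (0 : EucSp d) 1 ⊆ ⋃ e : D, Metric.ball (e : EucSp d) δ := by
      intro u _
      obtain ⟨v, hv1, hv2⟩ := hDd.exists_dist_lt u hδ0
      exact Set.mem_iUnion.2 ⟨⟨v, hv1⟩, Metric.mem_ball.2 hv2⟩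
    obtain ⟨t, ht⟩ := (isCompact_sphere (0 : EucSp d) 1).elim_finite_subcover
      (fun e : D => Metric.ball (e : EucSp d) δ) (fun e => Metric.isOpen_ball) hcover
    have hNe : ∀ e : D, ∃ N : ℕ, ∀ n : ℕ, N ≤ n →
        |F ((n : ℝ) • (e : EucSp d)) ω| ≤ (qr : ℝ) * n := by
      intro e
      obtain ⟨h1, h2⟩ := hω (e : EucSp d) e.2 qr hq
      simp only [Aset, Set.mem_setOf_eq, not_forall, not_exists, not_and, not_lt] at h1 h2
      obtain ⟨N1, hN1⟩ := h1
      obtain ⟨N2, hN2⟩ := h2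
      refine ⟨max N1 N2, fun n hn => abs_le.2 ⟨?_, ?_⟩⟩
      · have := hN2 n (le_trans (le_max_right _ _) hn)
        simp only [hF'def] at this
        linarith
      · exact hN1 n (le_trans (le_max_left _ _) hn)
    choose Nf hNf using hNe
    set N₀ : ℕ := t.sup Nf with hN₀def
    have hCε : 0 ≤ 6 * C / ε' := by positivity
    refine ⟨(N₀ : ℝ) + 6 * C / ε' + 1,
      by have h0 : (0:ℝ) ≤ (N₀ : ℝ) := Nat.cast_nonneg _; linarith, fun x hx => ?_⟩
    set r : ℝ := ‖x‖ with hrdef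
    have hr1 : 1 ≤ r := by
      have : (0:ℝ) ≤ (N₀ : ℝ) := Nat.cast_nonneg _
      linarith
    have hr0 : 0 < r := lt_of_lt_of_le one_pos hr1
    set u : EucSp d := r⁻¹ • x with hudef
    have hu : ‖u‖ = 1 := by
      rw [hudef, norm_smul, norm_inv, Real.norm_eq_abs, abs_of_pos hr0, ← hrdef,
        inv_mul_cancel₀ hr0.ne']
    have hu' : u ∈ Metric.sphere (0 : EucSp d) 1 := by
      simpa [mem_sphere_zero_iff_norm] using hu
    obtain ⟨e, het, heb⟩ := Set.mem_iUnion₂.1 (ht hu')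
    have hue : ‖u - (e : EucSp d)‖ < δ := by rwa [Metric.mem_ball, dist_eq_norm] at heb
    set n : ℕ := ⌊r⌋₊ with hndef
    have hn1 : (n : ℝ) ≤ r := Nat.floor_le hr0.le
    have hn2 : r < n + 1 := Nat.lt_floor_add_one r
    have hnN : Nf e ≤ n := by
      have h1 : (N₀ : ℝ) + 1 ≤ r := by linarith
      have h2 : (N₀ : ℝ) < (n : ℝ) + 1 := by linarith
      have h3 : N₀ < n + 1 := by exact_mod_cast h2
      exact le_trans (Finset.le_sup het) (Nat.lt_succ_iff.1 h3)
    have hFn : |F ((n : ℝ) • (e : EucSp d)) ω| ≤ (qr : ℝ) * n := hNf e n hnN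
    have hxre : x = r • u := by
      rw [hudef, smul_smul, mul_inv_cancel₀ hr0.ne', one_smul]
    have hCd : C * δ ≤ ε' / 3 := by
      calc C * δ ≤ C * (ε' / (3 * C)) := mul_le_mul_of_nonneg_left (min_le_right _ _) hC.le
      _ = ε' / 3 := by field_simp
    have e1 : |F x ω - F (r • (e : EucSp d)) ω| ≤ ε' / 3 * r := by
      have hl := hFlip ω x (r • (e : EucSp d))
      have hnorm : ‖x - r • (e : EucSp d)‖ = r * ‖u - (e : EucSp d)‖ := by
        rw [hxre, ← smul_sub, norm_smul, Real.norm_eq_abs, abs_of_pos hr0]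
      have h2 : C * ‖x - r • (e : EucSp d)‖ ≤ C * (r * δ) := by
        apply mul_le_mul_of_nonneg_left _ hC.le
        rw [hnorm]
        exact mul_le_mul_of_nonneg_left hue.le hr0.le
      have h3 : C * (r * δ) = (C * δ) * r := by ring
      have h4 : (C * δ) * r ≤ ε' / 3 * r := mul_le_mul_of_nonneg_right hCd hr0.le
      linarith
    have he2 : ‖(e : EucSp d)‖ ≤ 2 := by
      have h1 : ‖(e : EucSp d)‖ = ‖u - (u - (e : EucSp d))‖ := by rw [sub_sub_cancel]
      rw [h1]
      calc ‖u - (u - (e : EucSp d))‖ ≤ ‖u‖ + ‖u - (e : EucSp d)‖ := norm_sub_le _ _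
      _ ≤ 1 + 1 := add_le_add hu.le (le_trans hue.le hδ1)
      _ = 2 := by norm_num
    have e2 : |F (r • (e : EucSp d)) ω - F ((n : ℝ) • (e : EucSp d)) ω| ≤ 2 * C := by
      have hl := hFlip ω (r • (e : EucSp d)) ((n : ℝ) • (e : EucSp d))
      have hs : r • (e : EucSp d) - (n : ℝ) • (e : EucSp d) = (r - n) • (e : EucSp d) := by
        rw [sub_smul]
      have hnorm : ‖r • (e : EucSp d) - (n : ℝ) • (e : EucSp d)‖ ≤ 2 := by
        rw [hs, norm_smul, Real.norm_eq_abs, abs_of_nonneg (by linarith : (0:ℝ) ≤ r - n)]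
        calc (r - n) * ‖(e : EucSp d)‖ ≤ 1 * 2 :=
          mul_le_mul (by linarith) he2 (norm_nonneg _) one_pos.le
        _ = 2 := by norm_num
      calc |F (r • (e : EucSp d)) ω - F ((n : ℝ) • (e : EucSp d)) ω|
          ≤ C * ‖r • (e : EucSp d) - (n : ℝ) • (e : EucSp d)‖ := hl
      _ ≤ C * 2 := mul_le_mul_of_nonneg_left hnorm hC.le
      _ = 2 * C := by ring
    have e3 : (qr : ℝ) * n ≤ ε' / 3 * r :=
      mul_le_mul hqr1.le hn1 (Nat.cast_nonneg n) (by positivity)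
    have hr6 : 6 * C / ε' ≤ r := by
      have : (0:ℝ) ≤ (N₀ : ℝ) := Nat.cast_nonneg _
      linarith
    have h2C : 2 * C ≤ ε' / 3 * r := by
      rw [div_le_iff₀ hε'] at hr6
      nlinarith
    have htri : |F x ω| ≤ |F x ω - F (r • (e : EucSp d)) ω|
        + |F (r • (e : EucSp d)) ω - F ((n : ℝ) • (e : EucSp d)) ω|
        + |F ((n : ℝ) • (e : EucSp d)) ω| := by
      have t1 : F x ω = (F x ω - F (r • (e : EucSp d)) ω)
          + (F (r • (e : EucSp d)) ω - F ((n : ℝ) • (e : EucSp d)) ω)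
          + F ((n : ℝ) • (e : EucSp d)) ω := by ring
      nth_rewrite 1 [t1]
      have a1 := abs_add_le (F x ω - F (r • (e : EucSp d)) ω)
        (F (r • (e : EucSp d)) ω - F ((n : ℝ) • (e : EucSp d)) ω)
      have a2 := abs_add_le ((F x ω - F (r • (e : EucSp d)) ω)
        + (F (r • (e : EucSp d)) ω - F ((n : ℝ) • (e : EucSp d)) ω))
        (F ((n : ℝ) • (e : EucSp d)) ω)
      linarith
    have : |F x ω| ≤ ε' / 3 * r + ε' / 3 * r + ε' / 3 * r := by linarith
    linarith
  obtain ⟨R, hR1, hR⟩ := main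
  refine Filter.eventually_comap.2 ?_
  filter_upwards [eventually_ge_atTop R] with b hb x hxb
  rw [Real.dist_eq, sub_zero, abs_div, abs_of_nonneg (norm_nonneg x)]
  have hxR : R ≤ ‖x‖ := by rw [hxb]; exact hb
  have hx0 : 0 < ‖x‖ := lt_of_lt_of_le (lt_of_lt_of_le one_pos hR1) hxR
  rw [div_lt_iff₀ hx0]
  have := hR x hxR
  have hεr : ε' * ‖x‖ < ε * ‖x‖ := by
    apply mul_lt_mul_of_pos_right _ hx0
    rw [hε'def]
    linarith
  linarith


end
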